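/- Fix real numbers t₁₁ > 0 and t₂₂ > 0, and s ∈ ℂ. For every natural number n ≥ 1 and every real x with t₁₁·t₂₂ − x² > 0, the normalized n-th derivative 2^{−n}·(d/dx)^n at x of the function x ↦ (t₁₁·t₂₂ − x²)^{−s} equals Σ_{k=0}^{⌊n/2⌋} 2^{−k} · a_{n−1,k} · (t₁₁·t₂₂ − x²)^{−(s+n−k)} · x^{n−2k} · Π_{l=0}^{n−k−1}(s+l). -/

import Mathlib

/-- The triangle numbers `a_{n,m}`: `a_{n,0} = 1`, `a_{0,m} = 0` for `m > 0`, and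
`a_{n,m} = (n - 2(m-1)) a_{n-1,m-1} + a_{n-1,m}` for `n, m > 0`. -/
def triangleNum : ℕ → ℕ → ℤ
  | _, 0 => 1
  | 0, _ + 1 => 0
  | n + 1, m + 1 => ((n : ℤ) + 1 - 2 * m) * triangleNum n m + triangleNum n (m + 1)

lemma triangleNum_eq_zero : ∀ n m : ℕ, n + 1 < 2 * m → triangleNum n m = 0 := by
  intro n
  induction n with
  | zero =>
    intro m h
    match m, h with
    | m + 1, _ => rfl
  | succ n ih =>
    intro m h
    match m, h with
    | m + 1, h =>
      show ((n : ℤ) + 1 - 2 * m) * triangleNum n m + triangleNum n (m + 1) = 0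
      have h2 : triangleNum n (m + 1) = 0 := ih _ (by omega)
      rcases eq_or_lt_of_le (show n + 1 ≤ 2 * m by omega) with he | hl
      · have : ((n : ℤ) + 1 - 2 * m) = 0 := by omega
        rw [this, h2]; ring
      · rw [ih m hl, h2]; ring

lemma triangleNum_zero (n : ℕ) : triangleNum n 0 = 1 := by cases n <;> rfl

/-- One term of the sum. -/
noncomputable def Gterm (c : ℝ) (s : ℂ) (n k : ℕ) (x : ℝ) : ℂ :=
  (1 / 2 ^ k : ℂ) * (triangleNum (n - 1) k : ℂ) *
    ((c - x ^ 2 : ℝ) : ℂ) ^ (-(s + ((n - k : ℕ) : ℂ))) * (x : ℂ) ^ (n - 2 * k) *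
    ∏ l ∈ Finset.range (n - k), (s + l)

noncomputable def Fsum (c : ℝ) (s : ℂ) (n : ℕ) (x : ℝ) : ℂ :=
  ∑ k ∈ Finset.range (n + 1), Gterm c s n k x

/-- First piece of the derivative of `Gterm`. -/
noncomputable def Aterm (c : ℝ) (s : ℂ) (n k : ℕ) (x : ℝ) : ℂ :=
  (1 / 2 ^ k : ℂ) * (triangleNum (n - 1) k : ℂ) *
    ((-(s + ((n - k : ℕ) : ℂ))) * ((c - x ^ 2 : ℝ) : ℂ) ^ (-(s + ((n - k : ℕ) : ℂ)) - 1) *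
      (-2 * x)) * (x : ℂ) ^ (n - 2 * k) *
    ∏ l ∈ Finset.range (n - k), (s + l)

/-- Second piece of the derivative of `Gterm`. -/
noncomputable def Bterm (c : ℝ) (s : ℂ) (n k : ℕ) (x : ℝ) : ℂ :=
  (1 / 2 ^ k : ℂ) * (triangleNum (n - 1) k : ℂ) *
    ((c - x ^ 2 : ℝ) : ℂ) ^ (-(s + ((n - k : ℕ) : ℂ))) *
    (((n - 2 * k : ℕ) : ℂ) * (x : ℂ) ^ (n - 2 * k - 1)) *
    ∏ l ∈ Finset.range (n - k), (s + l)

lemma hasDerivAt_base (c : ℝ) (α : ℂ) (x : ℝ) (hx : 0 < c - x ^ 2) :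
    HasDerivAt (fun x' : ℝ => ((c - x' ^ 2 : ℝ) : ℂ) ^ α)
      (α * ((c - x ^ 2 : ℝ) : ℂ) ^ (α - 1) * (-2 * x)) x := by
  have h1 : HasDerivAt (fun z : ℂ => (c : ℂ) - z ^ 2) (-(2 * (x : ℂ))) (x : ℂ) := by
    have := (hasDerivAt_pow 2 (x : ℂ)).const_sub (c : ℂ)
    refine this.congr_deriv ?_
    push_cast; ring
  have hslit : ((c : ℂ) - (x : ℂ) ^ 2) ∈ Complex.slitPlane := by
    rw [Complex.mem_slitPlane_iff]
    left
    simp only [Complex.sub_re, Complex.ofReal_re]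
    have : ((x : ℂ) ^ 2).re = x ^ 2 := by
      rw [show ((x:ℂ)^2) = ((x^2 : ℝ) : ℂ) by push_cast; ring, Complex.ofReal_re]
    rw [this]; exact hx
  have h2 := (HasDerivAt.cpow_const (c := α) h1 hslit).comp_ofReal
  have hfun : (fun x' : ℝ => ((c - x' ^ 2 : ℝ) : ℂ) ^ α) =
      (fun y : ℝ => ((c : ℂ) - (y : ℂ) ^ 2) ^ α) := by
    funext y; push_cast; ring_nf
  rw [hfun]
  convert h2 using 1
  push_cast; ring

lemma hasDerivAt_Gterm (c : ℝ) (s : ℂ) (n k : ℕ) (x : ℝ) (hx : 0 < c - x ^ 2) :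
    HasDerivAt (fun y => Gterm c s n k y) (Aterm c s n k x + Bterm c s n k x) x := by
  have hg := hasDerivAt_base c (-(s + ((n - k : ℕ) : ℂ))) x hx
  have hp : HasDerivAt (fun y : ℝ => (y : ℂ) ^ (n - 2 * k))
      (((n - 2 * k : ℕ) : ℂ) * (x : ℂ) ^ (n - 2 * k - 1)) x :=
    (hasDerivAt_pow (n - 2 * k) (x : ℂ)).comp_ofReal
  have h := ((hg.const_mul ((1 / 2 ^ k : ℂ) * (triangleNum (n - 1) k : ℂ))).mul hp).mul_const
    (∏ l ∈ Finset.range (n - k), (s + l))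
  have hfun : (fun y => Gterm c s n k y) =
      (fun y : ℝ => ((1 / 2 ^ k : ℂ) * (triangleNum (n - 1) k : ℂ) *
        ((c - y ^ 2 : ℝ) : ℂ) ^ (-(s + ((n - k : ℕ) : ℂ))) * (y : ℂ) ^ (n - 2 * k)) *
        ∏ l ∈ Finset.range (n - k), (s + l)) := by
    funext y; unfold Gterm; ring
  rw [hfun]
  refine h.congr_deriv ?_
  unfold Aterm Bterm
  ring

lemma Aterm_top (c : ℝ) (s : ℂ) (n : ℕ) (x : ℝ) :
    Aterm c s n (n + 1) x = 0 := by
  unfold Aterm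
  rw [triangleNum_eq_zero (n - 1) (n + 1) (by omega)]
  simp

lemma Aterm_zero (c : ℝ) (s : ℂ) (n : ℕ) (x : ℝ) :
    Aterm c s n 0 x = 2 * Gterm c s (n + 1) 0 x := by
  unfold Aterm Gterm
  simp only [Nat.sub_zero, Nat.mul_zero, pow_zero]
  rw [triangleNum_zero, triangleNum_zero]
  rw [show (-(s + ((n : ℕ) : ℂ)) - 1) = -(s + (((n + 1 : ℕ)) : ℂ)) by push_cast; ring]
  rw [Finset.prod_range_succ, pow_succ]
  push_cast
  ring

lemma step_k (c : ℝ) (s : ℂ) (m k : ℕ) (x : ℝ) :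
    Aterm c s (m + 1) (k + 1) x + Bterm c s (m + 1) k x = 2 * Gterm c s (m + 2) (k + 1) x := by
  have hrec : (triangleNum (m + 1) (k + 1) : ℂ) =
      ((m : ℂ) + 1 - 2 * k) * (triangleNum m k : ℂ) + (triangleNum m (k + 1) : ℂ) := by
    rw [show triangleNum (m + 1) (k + 1) =
      ((m : ℤ) + 1 - 2 * k) * triangleNum m k + triangleNum m (k + 1) from rfl]
    push_cast; ring
  have hG : 2 * Gterm c s (m + 2) (k + 1) x =
      ((1 / 2 ^ k : ℂ) * (((m : ℂ) + 1 - 2 * k) * (triangleNum m k : ℂ)) *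
        ((c - x ^ 2 : ℝ) : ℂ) ^ (-(s + ((m + 1 - k : ℕ) : ℂ))) * (x : ℂ) ^ (m - 2 * k) *
        ∏ l ∈ Finset.range (m + 1 - k), (s + l)) +
      ((1 / 2 ^ k : ℂ) * (triangleNum m (k + 1) : ℂ) *
        ((c - x ^ 2 : ℝ) : ℂ) ^ (-(s + ((m + 1 - k : ℕ) : ℂ))) * (x : ℂ) ^ (m - 2 * k) *
        ∏ l ∈ Finset.range (m + 1 - k), (s + l)) := by
    unfold Gterm
    rw [show m + 2 - 1 = m + 1 from rfl, hrec,
      show m + 2 - (k + 1) = m + 1 - k from by omega,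
      show m + 2 - 2 * (k + 1) = m - 2 * k from by omega]
    ring
  rw [hG]
  have hB : Bterm c s (m + 1) k x =
      (1 / 2 ^ k : ℂ) * (((m : ℂ) + 1 - 2 * k) * (triangleNum m k : ℂ)) *
        ((c - x ^ 2 : ℝ) : ℂ) ^ (-(s + ((m + 1 - k : ℕ) : ℂ))) * (x : ℂ) ^ (m - 2 * k) *
        ∏ l ∈ Finset.range (m + 1 - k), (s + l) := by
    unfold Bterm
    rw [show m + 1 - 1 = m from rfl, show m + 1 - 2 * k - 1 = m - 2 * k from by omega]
    rcases le_or_gt (2 * k) (m + 1) with h | h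
    · rw [Nat.cast_sub h]
      push_cast
      ring
    · rw [triangleNum_eq_zero m k (by omega)]
      simp
  have hA : Aterm c s (m + 1) (k + 1) x =
      (1 / 2 ^ k : ℂ) * (triangleNum m (k + 1) : ℂ) *
        ((c - x ^ 2 : ℝ) : ℂ) ^ (-(s + ((m + 1 - k : ℕ) : ℂ))) * (x : ℂ) ^ (m - 2 * k) *
        ∏ l ∈ Finset.range (m + 1 - k), (s + l) := by
    unfold Aterm
    rw [show m + 1 - 1 = m from rfl]
    rcases le_or_gt (2 * (k + 1)) (m + 1) with h | h
    · obtain ⟨p, rfl⟩ : ∃ p, m = 2 * k + 1 + p := ⟨m - (2 * k + 1), by omega⟩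
      rw [show 2 * k + 1 + p + 1 - (k + 1) = k + 1 + p from by omega,
        show 2 * k + 1 + p + 1 - 2 * (k + 1) = p from by omega,
        show 2 * k + 1 + p + 1 - k = k + 2 + p from by omega,
        show 2 * k + 1 + p - 2 * k = p + 1 from by omega]
      rw [show (-(s + ((k + 1 + p : ℕ) : ℂ)) - 1) = -(s + ((k + 2 + p : ℕ) : ℂ)) by
        push_cast; ring]
      rw [show k + 2 + p = (k + 1 + p) + 1 from by omega, Finset.prod_range_succ,
        pow_succ]
      push_cast
      ring
    · rw [triangleNum_eq_zero m (k + 1) (by omega)]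
      simp
  rw [hA, hB]
  ring

lemma hasDerivAt_Fsum (c : ℝ) (s : ℂ) (n : ℕ) (hn : 1 ≤ n) (x : ℝ) (hx : 0 < c - x ^ 2) :
    HasDerivAt (Fsum c s n) (2 * Fsum c s (n + 1) x) x := by
  obtain ⟨m, rfl⟩ : ∃ m, n = m + 1 := ⟨n - 1, by omega⟩
  have hsum : HasDerivAt (fun y => ∑ k ∈ Finset.range (m + 2), Gterm c s (m + 1) k y)
      (∑ k ∈ Finset.range (m + 2), (Aterm c s (m + 1) k x + Bterm c s (m + 1) k x)) x :=
    HasDerivAt.fun_sum (fun k _ => hasDerivAt_Gterm c s (m + 1) k x hx)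
  have hval : (∑ k ∈ Finset.range (m + 2), (Aterm c s (m + 1) k x + Bterm c s (m + 1) k x)) =
      2 * Fsum c s (m + 2) x := by
    rw [Finset.sum_add_distrib]
    rw [Finset.sum_range_succ' (fun k => Aterm c s (m + 1) k x) (m + 1)]
    have htop : ∑ k ∈ Finset.range (m + 2), Aterm c s (m + 1) (k + 1) x =
        ∑ k ∈ Finset.range (m + 1), Aterm c s (m + 1) (k + 1) x := by
      rw [Finset.sum_range_succ, Aterm_top, add_zero]
    calc (∑ k ∈ Finset.range (m + 1), Aterm c s (m + 1) (k + 1) x + Aterm c s (m + 1) 0 x) +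
          ∑ k ∈ Finset.range (m + 2), Bterm c s (m + 1) k x
        = Aterm c s (m + 1) 0 x +
            (∑ k ∈ Finset.range (m + 2), Aterm c s (m + 1) (k + 1) x +
             ∑ k ∈ Finset.range (m + 2), Bterm c s (m + 1) k x) := by rw [htop]; ring
      _ = Aterm c s (m + 1) 0 x +
            ∑ k ∈ Finset.range (m + 2), (Aterm c s (m + 1) (k + 1) x + Bterm c s (m + 1) k x) := by
          rw [Finset.sum_add_distrib]
      _ = 2 * Gterm c s (m + 2) 0 x +
            ∑ k ∈ Finset.range (m + 2), 2 * Gterm c s (m + 2) (k + 1) x := by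
          rw [Aterm_zero]
          congr 1
          exact Finset.sum_congr rfl (fun k _ => step_k c s m k x)
      _ = 2 * Fsum c s (m + 2) x := by
          unfold Fsum
          rw [Finset.sum_range_succ' (fun k => Gterm c s (m + 2) k x) (m + 2)]
          rw [mul_add, Finset.mul_sum]
          ring
  rw [← hval]
  exact hsum

lemma main_aux (c : ℝ) (s : ℂ) (n : ℕ) (hn : 1 ≤ n) :
    ∀ x ∈ {x' : ℝ | 0 < c - x' ^ 2},
      iteratedDerivWithin n (fun x' : ℝ => ((c - x' ^ 2 : ℝ) : ℂ) ^ (-s))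
        {x' : ℝ | 0 < c - x' ^ 2} x = 2 ^ n * Fsum c s n x := by
  have hopen : IsOpen {x' : ℝ | 0 < c - x' ^ 2} :=
    isOpen_lt continuous_const (continuous_const.sub (continuous_pow 2))
  induction n, hn using Nat.le_induction with
  | base =>
    intro x hx
    have hx' : (0 : ℝ) < c - x ^ 2 := hx
    rw [iteratedDerivWithin_one,
      derivWithin_of_isOpen hopen hx]
    rw [(hasDerivAt_base c (-s) x hx').deriv]
    unfold Fsum Gterm
    rw [Finset.sum_range_succ, Finset.sum_range_succ, Finset.sum_range_zero]
    rw [show triangleNum (1 - 1) 1 = 0 from rfl, show triangleNum (1 - 1) 0 = 1 from rfl]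
    norm_num [Finset.prod_range_one]
    rw [show (-s - 1) = -(s + 1) by ring]
    ring_nf
  | succ n hn ih =>
    intro x hx
    have hx' : (0 : ℝ) < c - x ^ 2 := hx
    rw [iteratedDerivWithin_succ]
    rw [derivWithin_congr (fun y hy => ih y hy) (ih x hx)]
    rw [derivWithin_of_isOpen hopen hx]
    have h := (hasDerivAt_Fsum c s n hn x hx').const_mul ((2 : ℂ) ^ n)
    rw [h.deriv]
    ring

theorem iteratedDeriv_det_pow_offdiag (t11 t22 : ℝ) (h11 : 0 < t11) (h22 : 0 < t22)
    (s : ℂ) (n : ℕ) (hn : 1 ≤ n) (x : ℝ) (hx : 0 < t11 * t22 - x ^ 2) :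
    (1 / 2 ^ n : ℂ) *
      iteratedDerivWithin n
        (fun x' : ℝ => ((t11 * t22 - x' ^ 2 : ℝ) : ℂ) ^ (-s))
        {x' : ℝ | 0 < t11 * t22 - x' ^ 2} x =
    ∑ k ∈ Finset.range (n / 2 + 1),
      (1 / 2 ^ k : ℂ) * (triangleNum (n - 1) k : ℂ) *
        ((t11 * t22 - x ^ 2 : ℝ) : ℂ) ^ (-(s + ((n - k : ℕ) : ℂ))) * (x : ℂ) ^ (n - 2 * k) *
        ∏ l ∈ Finset.range (n - k), (s + l) := by
  rw [main_aux (t11 * t22) s n hn x hx]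
  have h2 : (1 / 2 ^ n : ℂ) * (2 ^ n * Fsum (t11 * t22) s n x) = Fsum (t11 * t22) s n x := by
    field_simp
  rw [h2]
  unfold Fsum Gterm
  symm
  apply Finset.sum_subset
  · intro k hk
    simp only [Finset.mem_range] at hk ⊢
    omega
  · intro k _ hk
    simp only [Finset.mem_range, not_lt] at hk
    rw [triangleNum_eq_zero (n - 1) k (by omega)]
    simp
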